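/- Fix b ≤ −3/16, set γ = 1 + (16/3)b (so γ ≤ 0) and s_* = √(−γ/(1−γ)). Then the function s ↦ M(φ_{1,2s}) := ∫_ℝ Φ_{1,2s}(x)² dx, defined for s ∈ (−1, −s_*), is continuous, strictly increasing, and maps (−1, −s_*) bijectively onto (0, ∞). -/

import Mathlib

open MeasureTheory Real Set Filter Topology

/-- The (bright) soliton profile of the derivative NLS after gauge transformation. -/
noncomputable def PhiB (γ ω c x : ℝ) : ℝ :=
  Real.sqrt (2 * (4 * ω - c ^ 2) /
    (Real.sqrt (c ^ 2 + γ * (4 * ω - c ^ 2)) * Real.cosh (Real.sqrt (4 * ω - c ^ 2) * x) - c))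

/-- Mass of the soliton with parameters `(ω, c) = (1, 2s)`. -/
noncomputable def massCurve (γ s : ℝ) : ℝ := ∫ x : ℝ, (PhiB γ 1 (2 * s) x) ^ 2

-- case a = b
lemma intB (k a : ℝ) (hk : 0 < k) (ha : 0 < a) :
    ∫ x : ℝ, (a * Real.cosh (k * x) + a)⁻¹ = 2 / (k * a) := by
  set f : ℝ → ℝ := fun x => (a * Real.cosh (k * x) + a)⁻¹ with hf
  have hfabs : ∀ x : ℝ, f |x| = f x := by
    intro x
    simp only [hf]
    rw [show k * |x| = |k * x| by rw [abs_mul, abs_of_pos hk], Real.cosh_abs]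
  have hpos : ∀ x : ℝ, 0 < a * Real.cosh (k * x) + a := by
    intro x
    have := Real.one_le_cosh (k * x)
    nlinarith
  have hderiv : ∀ x : ℝ, HasDerivAt (fun x : ℝ => -2 / (k * a * (Real.exp (k * x) + 1))) (f x) x := by
    intro x
    have h1 : HasDerivAt (fun x : ℝ => k * x) k x := by
      simpa using (hasDerivAt_id x).const_mul k
    have h2 : HasDerivAt (fun x : ℝ => Real.exp (k * x) + 1) (Real.exp (k * x) * k) x :=
      (h1.exp).add_const 1
    have h3 : HasDerivAt (fun x : ℝ => k * a * (Real.exp (k * x) + 1))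
        (k * a * (Real.exp (k * x) * k)) x := h2.const_mul _
    have hne : k * a * (Real.exp (k * x) + 1) ≠ 0 := by positivity
    have h4 := (h3.inv hne).const_mul (-2)
    have h5 : (fun x : ℝ => -2 * (k * a * (Real.exp (k * x) + 1))⁻¹)
        = fun x : ℝ => -2 / (k * a * (Real.exp (k * x) + 1)) := by
      funext y; rw [div_eq_mul_inv]
    simp only [Pi.inv_apply] at h4
    rw [h5] at h4
    refine h4.congr_deriv (Eq.symm ?_)
    have hu : (0:ℝ) < Real.exp (k * x) := Real.exp_pos _
    have hc : Real.cosh (k * x) = (Real.exp (k * x) + (Real.exp (k * x))⁻¹) / 2 := by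
      rw [Real.cosh_eq, Real.exp_neg]
    simp only [hf]
    rw [hc]
    have hk' : k ≠ 0 := ne_of_gt hk
    have ha' : a ≠ 0 := ne_of_gt ha
    have hu' : Real.exp (k * x) ≠ 0 := ne_of_gt hu
    have he1 : Real.exp (k * x) + 1 ≠ 0 := by positivity
    rw [inv_eq_iff_eq_inv]
    field_simp
    ring
  have hdenomTop : Tendsto (fun x : ℝ => k * a * (Real.exp (k * x) + 1)) atTop atTop := by
    apply Tendsto.const_mul_atTop (by positivity : (0:ℝ) < k * a)
    apply tendsto_atTop_add_const_right
    exact Real.tendsto_exp_atTop.comp (tendsto_id.const_mul_atTop hk)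
  have htop : Tendsto (fun x : ℝ => -2 / (k * a * (Real.exp (k * x) + 1))) atTop (𝓝 0) :=
    tendsto_const_nhds.div_atTop hdenomTop
  have hIoi : ∫ x in Ioi (0:ℝ), f x = 0 - (-2 / (k * a * (Real.exp (k * 0) + 1))) := by
    apply integral_Ioi_of_hasDerivAt_of_nonneg' (fun x _ => hderiv x)
      (fun x _ => le_of_lt (inv_pos.mpr (hpos x))) htop
  have hIoi' : ∫ x in Ioi (0:ℝ), f x = 1 / (k * a) := by
    rw [hIoi]; rw [mul_zero, Real.exp_zero]; field_simp; ring
  calc ∫ x : ℝ, f x = ∫ x : ℝ, f |x| := by simp_rw [hfabs]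
    _ = 2 * ∫ x in Ioi (0:ℝ), f x := integral_comp_abs
    _ = 2 / (k * a) := by rw [hIoi']; field_simp

-- case a < b
lemma intA (k a b : ℝ) (hk : 0 < k) (ha : 0 < a) (hab : a < b) :
    ∫ x : ℝ, (a * Real.cosh (k * x) + b)⁻¹
      = 2 / (k * Real.sqrt (b ^ 2 - a ^ 2)) * Real.log ((b + Real.sqrt (b ^ 2 - a ^ 2)) / a) := by
  have hb : 0 < b := lt_trans ha hab
  set d := Real.sqrt (b ^ 2 - a ^ 2) with hd
  have hd2 : d ^ 2 = b ^ 2 - a ^ 2 := Real.sq_sqrt (by nlinarith)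
  have hd0 : 0 < d := Real.sqrt_pos.mpr (by nlinarith)
  have hdb : d < b := by nlinarith
  set r₁ : ℝ := (-b + d) / a with hr₁def
  set r₂ : ℝ := (-b - d) / a with hr₂def
  have hr₁ : r₁ < 0 := div_neg_of_neg_of_pos (by linarith) ha
  have hr₂ : r₂ < 0 := div_neg_of_neg_of_pos (by linarith) ha
  set f : ℝ → ℝ := fun x => (a * Real.cosh (k * x) + b)⁻¹ with hf
  set F : ℝ → ℝ := fun x =>
    (k * d)⁻¹ * Real.log ((Real.exp (k * x) - r₁) / (Real.exp (k * x) - r₂)) with hF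
  have hfabs : ∀ x : ℝ, f |x| = f x := by
    intro x
    simp only [hf]
    rw [show k * |x| = |k * x| by rw [abs_mul, abs_of_pos hk], Real.cosh_abs]
  have hpos : ∀ x : ℝ, 0 < a * Real.cosh (k * x) + b := by
    intro x
    have := Real.one_le_cosh (k * x)
    nlinarith
  have hnum : ∀ x : ℝ, 0 < Real.exp (k * x) - r₁ := fun x => by
    have := Real.exp_pos (k * x); linarith
  have hden : ∀ x : ℝ, 0 < Real.exp (k * x) - r₂ := fun x => by
    have := Real.exp_pos (k * x); linarith
  have hderiv : ∀ x : ℝ, HasDerivAt F (f x) x := by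
    intro x
    have h1 : HasDerivAt (fun x : ℝ => k * x) k x := by
      simpa using (hasDerivAt_id x).const_mul k
    have h2 : HasDerivAt (fun x : ℝ => Real.exp (k * x)) (Real.exp (k * x) * k) x := h1.exp
    have h3 : HasDerivAt (fun x : ℝ => Real.exp (k * x) - r₁) (Real.exp (k * x) * k) x :=
      h2.sub_const r₁
    have h4 : HasDerivAt (fun x : ℝ => Real.exp (k * x) - r₂) (Real.exp (k * x) * k) x :=
      h2.sub_const r₂
    have h5 := h3.div h4 (ne_of_gt (hden x))
    have h6 := (h5.log (ne_of_gt (div_pos (hnum x) (hden x)))).const_mul (k * d)⁻¹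
    refine h6.congr_deriv (Eq.symm ?_)
    have hu : (0:ℝ) < Real.exp (k * x) := Real.exp_pos _
    have hk' : k ≠ 0 := ne_of_gt hk
    have ha' : a ≠ 0 := ne_of_gt ha
    have hd' : d ≠ 0 := ne_of_gt hd0
    have hu' : Real.exp (k * x) ≠ 0 := ne_of_gt hu
    set E := Real.exp (k * x) with hE
    have hP : 0 < a * E ^ 2 + 2 * b * E + a := by positivity
    set P := a * E ^ 2 + 2 * b * E + a with hPdef
    have c1 : (E - r₂) * (E - r₁) = P / a := by
      simp only [hr₁def, hr₂def, hPdef]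
      field_simp
      ring_nf
      linear_combination (-1:ℝ) * hd2
    have c2 : r₁ - r₂ = 2 * d / a := by
      simp only [hr₁def, hr₂def]; field_simp; ring
    have c3 : a * Real.cosh (k * x) + b = P / (2 * E) := by
      rw [Real.cosh_eq, Real.exp_neg, ← hE, hPdef]
      field_simp
      ring
    have hN : E * k * (E - r₂) - (E - r₁) * (E * k) = E * k * (2 * d / a) := by
      rw [show E * k * (E - r₂) - (E - r₁) * (E * k) = E * k * (r₁ - r₂) by ring, c2]
    simp only [hf, ← hE]
    rw [c3, hN]
    have hsplit : ∀ A B C : ℝ, B ≠ 0 → C ≠ 0 → A / B ^ 2 / (C / B) = A / (B * C) := by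
      intro A B C hB hC; field_simp
    simp only [Pi.div_apply, ← hE]
    rw [hsplit _ _ _ (ne_of_gt (hden x)) (ne_of_gt (hnum x)), c1]
    rw [inv_div]
    field_simp
  have htexp : Tendsto (fun x : ℝ => Real.exp (k * x)) atTop atTop :=
    Real.tendsto_exp_atTop.comp (tendsto_id.const_mul_atTop hk)
  have hratio : Tendsto (fun x : ℝ => (Real.exp (k * x) - r₁) / (Real.exp (k * x) - r₂))
      atTop (𝓝 1) := by
    have h1 : Tendsto (fun x : ℝ => 1 - r₁ / Real.exp (k * x)) atTop (𝓝 (1 - 0)) :=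
      tendsto_const_nhds.sub (tendsto_const_nhds.div_atTop htexp)
    have h2 : Tendsto (fun x : ℝ => 1 - r₂ / Real.exp (k * x)) atTop (𝓝 (1 - 0)) :=
      tendsto_const_nhds.sub (tendsto_const_nhds.div_atTop htexp)
    have h3 : Tendsto (fun x : ℝ => (1 - r₁ / Real.exp (k * x)) / (1 - r₂ / Real.exp (k * x)))
        atTop (𝓝 1) := by
      have h4 := h1.div h2 (by norm_num)
      rw [show ((1:ℝ)-0)/(1-0) = 1 by norm_num] at h4
      exact h4
    refine h3.congr fun x => ?_
    have hu : (0:ℝ) < Real.exp (k * x) := Real.exp_pos _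
    have n2 : Real.exp (k * x) - r₂ ≠ 0 := ne_of_gt (hden x)
    have e2 : 1 - r₂ / Real.exp (k * x) = (Real.exp (k * x) - r₂) / Real.exp (k * x) := by
      field_simp
    have e1 : 1 - r₁ / Real.exp (k * x) = (Real.exp (k * x) - r₁) / Real.exp (k * x) := by
      field_simp
    rw [e1, e2, div_div_div_cancel_right₀ (ne_of_gt hu)]
  have hFtop : Tendsto F atTop (𝓝 0) := by
    have := (hratio.log one_ne_zero).const_mul (k * d)⁻¹
    simpa [hF, Real.log_one] using this
  have hIoi : ∫ x in Ioi (0:ℝ), f x = 0 - F 0 :=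
    integral_Ioi_of_hasDerivAt_of_nonneg' (fun x _ => hderiv x)
      (fun x _ => le_of_lt (inv_pos.mpr (hpos x))) hFtop
  have h1r₁ : (0:ℝ) < 1 - r₁ := by linarith
  have h1r₂ : (0:ℝ) < 1 - r₂ := by linarith
  have key : (1 - r₁) / (1 - r₂) = ((b + d) / a)⁻¹ := by
    rw [inv_div, div_eq_div_iff (ne_of_gt h1r₂) (by positivity : (b + d) ≠ 0)]
    simp only [hr₁def, hr₂def]
    field_simp
    linear_combination (-1:ℝ) * hd2
  calc ∫ x : ℝ, f x = ∫ x : ℝ, f |x| := by simp_rw [hfabs]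
    _ = 2 * ∫ x in Ioi (0:ℝ), f x := integral_comp_abs
    _ = 2 / (k * d) * Real.log ((b + d) / a) := by
      rw [hIoi]
      simp only [hF, mul_zero, Real.exp_zero]
      rw [key, Real.log_inv]
      ring

lemma facts (γ s : ℝ) (hγ : γ ≤ 0) (h1 : -1 < s) (hss : s < -Real.sqrt (-γ/(1-γ))) :
    s < 0 ∧ s^2 < 1 ∧ 0 < s^2*(1-γ)+γ := by
  have hγ1 : (0:ℝ) < 1 - γ := by linarith
  have hnn : 0 ≤ -γ/(1-γ) := div_nonneg (by linarith) (le_of_lt hγ1)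
  have hst : Real.sqrt (-γ/(1-γ)) ^ 2 = -γ/(1-γ) := Real.sq_sqrt hnn
  have hst0 : 0 ≤ Real.sqrt (-γ/(1-γ)) := Real.sqrt_nonneg _
  have hs0 : s < 0 := lt_of_lt_of_le hss (by linarith)
  have hs1 : s^2 < 1 := by nlinarith
  have hsq : Real.sqrt (-γ/(1-γ))^2 < s^2 := by nlinarith
  refine ⟨hs0, hs1, ?_⟩
  have h2 : -γ/(1-γ) < s^2 := by rwa [hst] at hsq
  have h3 := (div_lt_iff₀ hγ1).mp h2
  nlinarith

lemma phiB_sq (γ s x : ℝ) (hs0 : s < 0) (hs1 : s^2 < 1) (hw : 0 < s^2*(1-γ)+γ) :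
    (PhiB γ 1 (2*s) x)^2 = 8*(1-s^2) *
      ((2*Real.sqrt (s^2*(1-γ)+γ)) * Real.cosh (Real.sqrt (4*1 - (2*s)^2) * x) + (-(2*s)))⁻¹ := by
  set w := Real.sqrt (s^2*(1-γ)+γ) with hwdef
  have hw0 : 0 < w := Real.sqrt_pos.mpr hw
  have hsq : (2*s)^2 + γ*(4*1 - (2*s)^2) = 4*(s^2*(1-γ)+γ) := by ring
  have hsqrt : Real.sqrt ((2*s)^2 + γ*(4*1 - (2*s)^2)) = 2*w := by
    rw [hsq, show (4:ℝ)*(s^2*(1-γ)+γ) = 2^2*(s^2*(1-γ)+γ) by norm_num,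
      Real.sqrt_mul (by positivity), Real.sqrt_sq (by norm_num : (0:ℝ) ≤ 2)]
  have hcosh := Real.one_le_cosh (Real.sqrt (4*1 - (2*s)^2) * x)
  have hden : 0 < 2*w * Real.cosh (Real.sqrt (4*1 - (2*s)^2) * x) - 2*s := by nlinarith
  rw [PhiB, Real.sq_sqrt]
  · rw [hsqrt]
    rw [div_eq_mul_inv, sub_eq_add_neg]
    congr 1
    ring
  · rw [hsqrt]
    apply div_nonneg (by nlinarith)
    linarith

lemma massB (s : ℝ) (h1 : -1 < s) (hss : s < 0) :
    massCurve 0 s = 4 * Real.sqrt (1 - s^2) / (-s) := by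
  have hs1 : s^2 < 1 := by nlinarith
  have hw : 0 < s^2*(1-(0:ℝ))+0 := by nlinarith
  have hps : (0:ℝ) < 1 - s^2 := by linarith
  set p := 1 - s^2 with hpdef
  have hk : Real.sqrt (4*1 - (2*s)^2) = 2 * Real.sqrt p := by
    rw [show (4:ℝ)*1 - (2*s)^2 = 2^2*p by rw [hpdef]; ring,
      Real.sqrt_mul (by positivity), Real.sqrt_sq (by norm_num : (0:ℝ) ≤ 2)]
  have hw' : Real.sqrt (s^2*(1-(0:ℝ))+0) = -s := by
    rw [show s^2*(1-(0:ℝ))+0 = s^2 by ring, Real.sqrt_sq_eq_abs, abs_of_neg hss]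
  have hk0 : 0 < 2 * Real.sqrt p := by positivity
  have hmass : massCurve 0 s = 8*p * ∫ x : ℝ, ((2*(-s)) * Real.cosh ((2*Real.sqrt p) * x) + (2*(-s)))⁻¹ := by
    rw [massCurve]
    rw [show (2:ℝ)*s = 2*s by rfl]
    have : ∀ x : ℝ, (PhiB 0 1 (2*s) x)^2 = 8*p *
        ((2*(-s)) * Real.cosh ((2*Real.sqrt p) * x) + (2*(-s)))⁻¹ := by
      intro x
      rw [phiB_sq 0 s x hss hs1 hw, hw', hk]
      ring_nf
      rw [hpdef]; ring
    simp_rw [this]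
    rw [MeasureTheory.integral_const_mul]
  rw [hmass, intB _ _ hk0 (by linarith : (0:ℝ) < 2*(-s))]
  have hsp : Real.sqrt p * Real.sqrt p = p := Real.mul_self_sqrt (le_of_lt hps)
  set q := Real.sqrt p with hqdef
  have hq0 : q ≠ 0 := by positivity
  have hs0 : s ≠ 0 := ne_of_lt hss
  rw [← hsp]
  field_simp
  ring

lemma massA (γ s : ℝ) (hγ : γ < 0) (hs0 : s < 0) (hs1 : s^2 < 1) (hw : 0 < s^2*(1-γ)+γ) :
    massCurve γ s = 4 / Real.sqrt (-γ) *
      Real.log ((-s + Real.sqrt (-γ) * Real.sqrt (1 - s^2)) / Real.sqrt (s^2*(1-γ)+γ)) := by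
  set p := 1 - s^2 with hpdef
  have hps : 0 < p := by nlinarith
  set w := Real.sqrt (s^2*(1-γ)+γ) with hwdef
  have hw0 : 0 < w := Real.sqrt_pos.mpr hw
  have hw2 : w^2 = s^2*(1-γ)+γ := Real.sq_sqrt (le_of_lt hw)
  have hk : Real.sqrt (4*1 - (2*s)^2) = 2 * Real.sqrt p := by
    rw [show (4:ℝ)*1 - (2*s)^2 = 2^2*p by rw [hpdef]; ring,
      Real.sqrt_mul (by positivity), Real.sqrt_sq (by norm_num : (0:ℝ) ≤ 2)]
  have hg2 : Real.sqrt (-γ)^2 = -γ := Real.sq_sqrt (by linarith)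
  have hq2 : Real.sqrt p^2 = p := Real.sq_sqrt (le_of_lt hps)
  have hwlt : w < -s := by nlinarith
  have hmass : massCurve γ s = 8*p *
      ∫ x : ℝ, ((2*w) * Real.cosh ((2*Real.sqrt p) * x) + (2*(-s)))⁻¹ := by
    rw [massCurve]
    have h : ∀ x : ℝ, (PhiB γ 1 (2*s) x)^2 = 8*p *
        ((2*w) * Real.cosh ((2*Real.sqrt p) * x) + (2*(-s)))⁻¹ := by
      intro x
      rw [phiB_sq γ s x hs0 hs1 hw, hk, ← hwdef, ← hpdef, show -(2*s) = 2*(-s) by ring]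
    simp_rw [h]
    rw [MeasureTheory.integral_const_mul]
  have hqpos : 0 < Real.sqrt p := Real.sqrt_pos.mpr hps
  rw [hmass, intA _ _ _ (by linarith : (0:ℝ) < 2*Real.sqrt p) (by linarith : (0:ℝ) < 2*w)
    (by linarith : 2*w < 2*(-s))]
  have hd : Real.sqrt ((2*(-s))^2 - (2*w)^2) = 2*(Real.sqrt (-γ) * Real.sqrt p) := by
    have e : (2*(Real.sqrt (-γ) * Real.sqrt p))^2 = 4*((-γ)*p) := by
      rw [mul_pow, mul_pow, hg2, hq2]; ring
    rw [show (2*(-s))^2 - (2*w)^2 = (2*(Real.sqrt (-γ) * Real.sqrt p))^2 by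
      rw [e]; linear_combination (-4:ℝ)*hw2]
    apply Real.sqrt_sq
    have hgpos : 0 ≤ Real.sqrt (-γ) := Real.sqrt_nonneg _
    have hqpos : 0 ≤ Real.sqrt p := Real.sqrt_nonneg _
    positivity
  rw [hd]
  have harg : (2*(-s) + 2*(Real.sqrt (-γ) * Real.sqrt p))/(2*w)
      = (-s + Real.sqrt (-γ) * Real.sqrt p)/w := by
    rw [show 2*(-s) + 2*(Real.sqrt (-γ) * Real.sqrt p)
      = 2*((-s) + Real.sqrt (-γ) * Real.sqrt p) by ring]
    rw [mul_div_mul_left _ _ (by norm_num : (2:ℝ) ≠ 0)]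
  rw [harg]
  rw [← mul_assoc]
  have hsp : Real.sqrt p * Real.sqrt p = p := Real.mul_self_sqrt (le_of_lt hps)
  have hgpos : 0 < Real.sqrt (-γ) := Real.sqrt_pos.mpr (by linarith)
  have hg0 : Real.sqrt (-γ) ≠ 0 := ne_of_gt hgpos
  have hq0 : Real.sqrt p ≠ 0 := ne_of_gt hqpos
  have hco : 8*p*(2/((2*Real.sqrt p)*(2*(Real.sqrt (-γ) * Real.sqrt p)))) = 4/Real.sqrt (-γ) := by
    set q := Real.sqrt p with hqdef
    rw [← hsp]
    field_simp
    ring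
  rw [hco]

lemma sq_eq_of_nonneg {A B : ℝ} (hA : 0 ≤ A) (hB : 0 ≤ B) (h : A^2 = B^2) : A = B := by
  nlinarith [sq_nonneg (A - B), sq_nonneg (A + B)]

lemma g0_cont : ContinuousOn (fun s : ℝ => 4*Real.sqrt (1-s^2)/(-s)) (Ioo (-1:ℝ) 0) := by
  apply ContinuousOn.div
  · exact (continuous_const.mul (Real.continuous_sqrt.comp (by continuity))).continuousOn
  · exact continuous_neg.continuousOn
  · intro s hs
    have : (0:ℝ) < -s := by simpa using neg_pos.mpr hs.2
    exact ne_of_gt this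

lemma g0_mono : StrictMonoOn (fun s : ℝ => 4*Real.sqrt (1-s^2)/(-s)) (Ioo (-1:ℝ) 0) := by
  intro s₁ h₁ s₂ h₂ hlt
  obtain ⟨a₁, b₁⟩ := h₁
  obtain ⟨a₂, b₂⟩ := h₂
  have hp₁ : (0:ℝ) < 1 - s₁^2 := by nlinarith
  have hp₂ : (0:ℝ) < 1 - s₂^2 := by nlinarith
  have h12 : 1 - s₁^2 < 1 - s₂^2 := by nlinarith
  have hsq : Real.sqrt (1-s₁^2) < Real.sqrt (1-s₂^2) := Real.sqrt_lt_sqrt (le_of_lt hp₁) h12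
  have hq₁ : 0 < Real.sqrt (1-s₁^2) := Real.sqrt_pos.mpr hp₁
  simp only
  rw [div_lt_div_iff₀ (by linarith) (by linarith)]
  nlinarith

lemma g0_bij : BijOn (fun s : ℝ => 4*Real.sqrt (1-s^2)/(-s)) (Ioo (-1:ℝ) 0) (Ioi 0) := by
  refine ⟨?_, g0_mono.injOn, ?_⟩
  · intro s hs
    obtain ⟨a₁, b₁⟩ := hs
    have hp : (0:ℝ) < 1 - s^2 := by nlinarith
    have h3 : (0:ℝ) < Real.sqrt (1-s^2) := Real.sqrt_pos.mpr hp
    refine mem_Ioi.mpr ?_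
    exact div_pos (by linarith) (by linarith)
  · intro y hy
    have hy0 : (0:ℝ) < y := hy
    set t := Real.sqrt (y^2+16) with htdef
    have ht2 : t^2 = y^2+16 := Real.sq_sqrt (by positivity)
    have ht0 : 0 ≤ t := Real.sqrt_nonneg _
    have ht4 : 4 < t := by nlinarith
    refine ⟨-4/t, ⟨?_, ?_⟩, ?_⟩
    · rw [neg_div]
      have : 4/t < 1 := (div_lt_one (by linarith)).mpr ht4
      linarith
    · rw [neg_div]
      have : 0 < 4/t := by positivity
      linarith
    · simp only
      have e1 : 1 - (-4/t)^2 = (y/t)^2 := by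
        field_simp
        linear_combination ht2
      rw [e1, Real.sqrt_sq (by positivity)]
      have ht0' : t ≠ 0 := by linarith
      field_simp

noncomputable def gA (γ : ℝ) : ℝ → ℝ := fun s =>
  4/Real.sqrt (-γ) * Real.log ((-s + Real.sqrt (-γ) * Real.sqrt (1-s^2)) / Real.sqrt (s^2*(1-γ)+γ))

lemma gA_cont (γ : ℝ) (hγ : γ < 0) :
    ContinuousOn (gA γ) (Ioo (-1) (-Real.sqrt (-γ/(1-γ)))) := by
  apply ContinuousOn.mul continuousOn_const
  apply ContinuousOn.log
  · apply ContinuousOn.div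
    · exact (continuous_neg.add (continuous_const.mul
        (Real.continuous_sqrt.comp (by continuity)))).continuousOn
    · exact (Real.continuous_sqrt.comp (by continuity)).continuousOn
    · intro s hs
      obtain ⟨hs0, hs1, hw⟩ := facts γ s (le_of_lt hγ) hs.1 hs.2
      exact ne_of_gt (Real.sqrt_pos.mpr hw)
  · intro s hs
    obtain ⟨hs0, hs1, hw⟩ := facts γ s (le_of_lt hγ) hs.1 hs.2
    have hw0 := Real.sqrt_pos.mpr hw
    have hm : 0 ≤ Real.sqrt (-γ) * Real.sqrt (1-s^2) := by positivity
    exact ne_of_gt (div_pos (by linarith) hw0)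

lemma gA_mono (γ : ℝ) (hγ : γ < 0) :
    StrictMonoOn (gA γ) (Ioo (-1) (-Real.sqrt (-γ/(1-γ)))) := by
  intro s₁ hh₁ s₂ hh₂ hlt
  obtain ⟨hs₁0, hs₁1, hw₁⟩ := facts γ s₁ (le_of_lt hγ) hh₁.1 hh₁.2
  obtain ⟨hs₂0, hs₂1, hw₂⟩ := facts γ s₂ (le_of_lt hγ) hh₂.1 hh₂.2
  have hw₁0 : 0 < Real.sqrt (s₁^2*(1-γ)+γ) := Real.sqrt_pos.mpr hw₁
  have hw₂0 : 0 < Real.sqrt (s₂^2*(1-γ)+γ) := Real.sqrt_pos.mpr hw₂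
  have hw₁2 : Real.sqrt (s₁^2*(1-γ)+γ)^2 = s₁^2*(1-γ)+γ := Real.sq_sqrt (le_of_lt hw₁)
  have hw₂2 : Real.sqrt (s₂^2*(1-γ)+γ)^2 = s₂^2*(1-γ)+γ := Real.sq_sqrt (le_of_lt hw₂)
  have hg0 : 0 < Real.sqrt (-γ) := Real.sqrt_pos.mpr (by linarith)
  have hss : s₂^2 < s₁^2 := by nlinarith
  have hm : Real.sqrt (1-s₁^2) < Real.sqrt (1-s₂^2) :=
    Real.sqrt_lt_sqrt (by nlinarith) (by nlinarith)
  have hm₁0 : 0 < Real.sqrt (1-s₁^2) := Real.sqrt_pos.mpr (by nlinarith)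
  have hw : Real.sqrt (s₂^2*(1-γ)+γ) < Real.sqrt (s₁^2*(1-γ)+γ) :=
    Real.sqrt_lt_sqrt (le_of_lt hw₂) (by nlinarith)
  have hcross : Real.sqrt (s₂^2*(1-γ)+γ)*(-s₁) < Real.sqrt (s₁^2*(1-γ)+γ)*(-s₂) := by
    have h2 : (Real.sqrt (s₂^2*(1-γ)+γ)*(-s₁))^2 < (Real.sqrt (s₁^2*(1-γ)+γ)*(-s₂))^2 := by
      rw [mul_pow, mul_pow, hw₁2, hw₂2]
      nlinarith
    nlinarith [mul_nonneg (le_of_lt hw₂0) (by linarith : (0:ℝ) ≤ -s₁),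
      mul_pos hw₁0 (by linarith : (0:ℝ) < -s₂)]
  have hN₁ : 0 < -s₁ + Real.sqrt (-γ)*Real.sqrt (1-s₁^2) := by nlinarith
  have harg : (-s₁ + Real.sqrt (-γ)*Real.sqrt (1-s₁^2))/Real.sqrt (s₁^2*(1-γ)+γ)
      < (-s₂ + Real.sqrt (-γ)*Real.sqrt (1-s₂^2))/Real.sqrt (s₂^2*(1-γ)+γ) := by
    rw [div_lt_div_iff₀ hw₁0 hw₂0]
    have e0 : Real.sqrt (1-s₁^2) * Real.sqrt (s₂^2*(1-γ)+γ)
        < Real.sqrt (1-s₂^2) * Real.sqrt (s₁^2*(1-γ)+γ) :=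
      mul_lt_mul'' hm hw (le_of_lt hm₁0) (le_of_lt hw₂0)
    have e := mul_lt_mul_of_pos_left e0 hg0
    nlinarith [e, hcross]
  have hlog := Real.log_lt_log (div_pos hN₁ hw₁0) harg
  simp only [gA]
  exact mul_lt_mul_of_pos_left hlog (by positivity)

lemma gA_bij (γ : ℝ) (hγ : γ < 0) :
    BijOn (gA γ) (Ioo (-1) (-Real.sqrt (-γ/(1-γ)))) (Ioi 0) := by
  have hg0 : 0 < Real.sqrt (-γ) := Real.sqrt_pos.mpr (by linarith)
  refine ⟨?_, (gA_mono γ hγ).injOn, ?_⟩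
  · intro s hs
    obtain ⟨hs0, hs1, hw⟩ := facts γ s (le_of_lt hγ) hs.1 hs.2
    have hw0 : 0 < Real.sqrt (s^2*(1-γ)+γ) := Real.sqrt_pos.mpr hw
    have hw2 : Real.sqrt (s^2*(1-γ)+γ)^2 = s^2*(1-γ)+γ := Real.sq_sqrt (le_of_lt hw)
    have hwlt : Real.sqrt (s^2*(1-γ)+γ) < -s := by nlinarith
    have hm0 : 0 < Real.sqrt (-γ)*Real.sqrt (1-s^2) :=
      mul_pos hg0 (Real.sqrt_pos.mpr (by nlinarith))
    refine mem_Ioi.mpr (mul_pos (by positivity) (Real.log_pos ?_))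
    rw [lt_div_iff₀ hw0]
    linarith
  · intro y hy
    have hy0 : (0:ℝ) < y := hy
    set ρ := Real.exp (Real.sqrt (-γ) * y / 4) with hρdef
    have hρ : 1 < ρ := by
      rw [hρdef, show (1:ℝ) = Real.exp 0 by simp]
      exact Real.exp_lt_exp.mpr (by positivity)
    set q := 2*ρ/(ρ^2+1) with hqdef
    have hρ2 : (0:ℝ) < ρ^2+1 := by positivity
    have hq0 : 0 < q := by positivity
    have hq1 : q < 1 := by
      rw [hqdef, div_lt_one hρ2]
      nlinarith
    have hD : (0:ℝ) < 1 - q^2 + (-γ) := by nlinarith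
    set t := Real.sqrt ((-γ)/(1-q^2+(-γ))) with htdef
    have ht2 : t^2 = (-γ)/(1-q^2+(-γ)) :=
      Real.sq_sqrt (div_nonneg (by linarith) (le_of_lt hD))
    have ht0 : 0 < t := Real.sqrt_pos.mpr (div_pos (by linarith) hD)
    have ht1 : t < 1 := by
      have h1 : t^2 < 1 := by
        rw [ht2, div_lt_one hD]
        nlinarith [mul_pos hq0 hq0]
      nlinarith
    refine ⟨-t, ⟨by linarith, ?_⟩, ?_⟩
    · have hlt2 : Real.sqrt (-γ/(1-γ)) < t := by
        have h1 : -γ/(1-γ) < -γ/(1-q^2+(-γ)) := by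
          rw [div_lt_div_iff₀ (by linarith) hD]
          nlinarith [mul_pos hq0 hq0]
        calc Real.sqrt (-γ/(1-γ)) < Real.sqrt ((-γ)/(1-q^2+(-γ))) :=
              Real.sqrt_lt_sqrt (div_nonneg (by linarith) (by linarith)) h1
          _ = t := by rw [htdef]
      linarith
    · -- value computation
      have hkey : t^2*(1-q^2+(-γ)) = -γ := by
        rw [ht2]; field_simp
      have hw : (-t)^2*(1-γ)+γ = (q*t)^2 := by
        linear_combination hkey
      have hwval : Real.sqrt ((-t)^2*(1-γ)+γ) = q*t := by
        rw [hw, Real.sqrt_sq (mul_nonneg (le_of_lt hq0) (le_of_lt ht0))]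
      have hx : Real.sqrt (-γ) * Real.sqrt (1-(-t)^2) = ((ρ^2-1)/(ρ^2+1))*t := by
        apply sq_eq_of_nonneg (by positivity)
          (mul_nonneg (div_nonneg (by nlinarith) (by positivity)) (le_of_lt ht0))
        rw [mul_pow, Real.sq_sqrt (by linarith : (0:ℝ) ≤ -γ),
          Real.sq_sqrt (by nlinarith : (0:ℝ) ≤ 1-(-t)^2)]
        have h2 : ((ρ^2-1)/(ρ^2+1))^2 = 1 - q^2 := by
          rw [hqdef]; field_simp; ring
        rw [mul_pow, h2]
        linear_combination (-1:ℝ) * hkey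
      simp only [gA]
      rw [hwval, hx]
      have harg : (-(-t) + ((ρ^2-1)/(ρ^2+1))*t) / (q*t) = ρ := by
        rw [hqdef]
        rw [neg_neg]
        have : t + (ρ^2-1)/(ρ^2+1)*t = (2*ρ^2/(ρ^2+1))*t := by field_simp; ring
        rw [this]
        rw [div_eq_iff (ne_of_gt (mul_pos (div_pos (by linarith) hρ2) ht0))]
        field_simp
      rw [harg, hρdef, Real.log_exp]
      field_simp

/-- For `b ≤ -3/16` (so `γ ≤ 0`), with `s_* = √(-γ/(1-γ))`, the map `s ↦ M(φ_{1,2s})`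
is continuous, strictly increasing, and maps `(-1, -s_*)` bijectively onto `(0, ∞)`. -/
theorem stmt_7 (b γ : ℝ) (hb : b ≤ -3 / 16) (hγ : γ = 1 + 16 / 3 * b) :
    ContinuousOn (massCurve γ) (Ioo (-1) (-Real.sqrt (-γ / (1 - γ)))) ∧
    StrictMonoOn (massCurve γ) (Ioo (-1) (-Real.sqrt (-γ / (1 - γ)))) ∧
    BijOn (massCurve γ) (Ioo (-1) (-Real.sqrt (-γ / (1 - γ)))) (Ioi 0) := by
  have hγ0 : γ ≤ 0 := by rw [hγ]; linarith
  rcases eq_or_lt_of_le hγ0 with heq | hlt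
  · -- γ = 0
    have hset : -Real.sqrt (-γ/(1-γ)) = 0 := by rw [heq]; norm_num
    rw [hset]
    have hEq : EqOn (massCurve γ) (fun s : ℝ => 4*Real.sqrt (1-s^2)/(-s)) (Ioo (-1:ℝ) 0) := by
      intro s hs
      rw [heq]
      exact massB s hs.1 hs.2
    refine ⟨g0_cont.congr hEq, ?_, g0_bij.congr hEq.symm⟩
    intro s₁ h₁ s₂ h₂ hlt'
    rw [hEq h₁, hEq h₂]
    exact g0_mono h₁ h₂ hlt'
  · -- γ < 0
    have hEq : EqOn (massCurve γ) (gA γ) (Ioo (-1) (-Real.sqrt (-γ/(1-γ)))) := by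
      intro s hs
      obtain ⟨hs0, hs1, hw⟩ := facts γ s hγ0 hs.1 hs.2
      rw [massA γ s hlt hs0 hs1 hw]
      rfl
    refine ⟨(gA_cont γ hlt).congr hEq, ?_, (gA_bij γ hlt).congr hEq.symm⟩
    intro s₁ h₁ s₂ h₂ hlt'
    rw [hEq h₁, hEq h₂]
    exact gA_mono γ hlt h₁ h₂ hlt'
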